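/- arXiv:2311.15794 — 2 statements merged into one kernel-verified Lean document; each statement's English description precedes it below -/
import Mathlib

section
/- Let A be an m × m matrix over a commutative ring and 1 ≤ k ≤ m. Then (1/k!) Σ δ^{i₁ i₂ ⋯ i_k}_{j₁ j₂ ⋯ j_k} A^{j₁}_{i₁} ⋯ A^{j_k}_{i_k} = Σ_{S ⊆ {1,…,m}, |S| = k} det(A_{S,S}), where the sum on the left runs over all k-tuples (i₁,…,i_k) and (j₁,…,j_k) of indices in {1,…,m}; that is, the generalized Kronecker-delta expression (2.2) of the paper equals the sum of all k × k principal minors of A. -/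
open Finset

/-- The generalized Kronecker delta `δ^{i₁ ⋯ i_k}_{j₁ ⋯ j_k}`: the determinant
of the `k × k` matrix whose `(a, b)` entry is the ordinary Kronecker delta
`δ^{i_b}_{j_a}`. -/
def genKroneckerDelta {m k : ℕ} (i j : Fin k → Fin m) : ℝ :=
  (Matrix.of fun a b : Fin k => if i b = j a then (1 : ℝ) else 0).det

/-- The principal minor of an `m × m` real matrix `A` corresponding to a
subset `S` of the indices: the determinant of the submatrix of `A` whose rows
and columns are indexed by `S`. -/
noncomputable def principalMinor {m : ℕ} (A : Matrix (Fin m) (Fin m) ℝ)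
    (S : Finset (Fin m)) : ℝ :=
  (A.submatrix (fun i : {x // x ∈ S} => (i : Fin m))
    (fun j : {x // x ∈ S} => (j : Fin m))).det

/-- Summing the generalized Kronecker delta against products of matrix entries
over the lower indices yields the determinant of the corresponding submatrix. -/
lemma gkd_inner_sum {m k : ℕ} (A : Matrix (Fin m) (Fin m) ℝ) (i : Fin k → Fin m) :
    ∑ j : Fin k → Fin m, genKroneckerDelta i j * ∏ a : Fin k, A (i a) (j a)
      = (A.submatrix i i).det := by
  simp only [genKroneckerDelta, Matrix.det_apply, Matrix.of_apply, Finset.sum_mul]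
  rw [Finset.sum_comm]
  refine Finset.sum_congr rfl fun σ _ => ?_
  rw [Finset.sum_eq_single (i ∘ σ.symm)]
  · have h1 : (∏ a : Fin k, if i a = (i ∘ σ.symm) (σ a) then (1:ℝ) else 0) = 1 := by
      simp
    rw [h1]
    have h2 : (∏ a : Fin k, A (i a) ((i ∘ σ.symm) a))
        = ∏ a : Fin k, A (i (σ a)) (i a) := by
      rw [← Equiv.prod_comp σ (fun a => A (i a) ((i ∘ σ.symm) a))]
      simp
    rw [h2]
    simp [Matrix.submatrix_apply, smul_mul_assoc]
  · intro j _ hj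
    have : ∃ b, j b ≠ i (σ.symm b) := by
      by_contra h
      push_neg at h
      exact hj (funext fun b => h b)
    obtain ⟨b, hb⟩ := this
    have : (∏ a : Fin k, if i a = j (σ a) then (1:ℝ) else 0) = 0 := by
      apply Finset.prod_eq_zero (Finset.mem_univ (σ.symm b))
      simp only [Equiv.apply_symm_apply]
      rw [if_neg]
      intro h; exact hb h.symm
    rw [this]
    simp
  · simp

/-- The sum over injective tuples of submatrix determinants, grouped by image. -/
lemma gkd_sum_inj {m k : ℕ} (A : Matrix (Fin m) (Fin m) ℝ) :
    ∑ i ∈ Finset.univ.filter (fun i : Fin k → Fin m => Function.Injective i),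
        (A.submatrix i i).det
      = ∑ S ∈ (Finset.univ : Finset (Fin m)).powersetCard k,
          ∑ e : Fin k ≃ {x // x ∈ S},
            (A.submatrix (fun a => ((e a : {x // x ∈ S}) : Fin m))
              (fun a => ((e a : {x // x ∈ S}) : Fin m))).det := by
  rw [← Finset.sum_sigma ((Finset.univ : Finset (Fin m)).powersetCard k)
    (fun S => (Finset.univ : Finset (Fin k ≃ {x // x ∈ S})))
    (fun x => (A.submatrix (fun a => ((x.2 a : {y // y ∈ x.1}) : Fin m))
      (fun a => ((x.2 a : {y // y ∈ x.1}) : Fin m))).det)]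
  symm
  refine Finset.sum_bij (fun x _ => fun a => ((x.2 a : {y // y ∈ x.1}) : Fin m)) ?_ ?_ ?_ ?_
  · rintro ⟨S, e⟩ hx
    simp only [Finset.mem_filter, Finset.mem_univ, true_and]
    exact fun a b hab => e.injective (Subtype.ext hab)
  · rintro ⟨S1, e1⟩ h1 ⟨S2, e2⟩ h2 heq
    replace heq : (fun a => ((e1 a : {y // y ∈ S1}) : Fin m))
        = (fun a => ((e2 a : {y // y ∈ S2}) : Fin m)) := heq
    have hS : S1 = S2 := by
      ext z
      constructor
      · intro hz
        have : z = ((e1 (e1.symm ⟨z, hz⟩) : {y // y ∈ S1}) : Fin m) := by simp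
        rw [this, congrFun heq (e1.symm ⟨z, hz⟩)]
        exact Subtype.mem _
      · intro hz
        have : z = ((e2 (e2.symm ⟨z, hz⟩) : {y // y ∈ S2}) : Fin m) := by simp
        rw [this, ← congrFun heq (e2.symm ⟨z, hz⟩)]
        exact Subtype.mem _
    subst hS
    have he : e1 = e2 := by
      ext a
      exact congrArg Fin.val (congrFun heq a)
    rw [he]
  · intro f hf
    simp only [Finset.mem_filter, Finset.mem_univ, true_and] at hf
    have hbij : Function.Bijective (fun a : Fin k =>
        (⟨f a, Finset.mem_image_of_mem f (Finset.mem_univ a)⟩ :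
          {y // y ∈ Finset.univ.image f})) := by
      constructor
      · intro a b hab
        exact hf (Subtype.ext_iff.mp hab)
      · rintro ⟨z, hz⟩
        obtain ⟨a, _, ha⟩ := Finset.mem_image.mp hz
        exact ⟨a, Subtype.ext ha⟩
    refine ⟨⟨Finset.univ.image f, Equiv.ofBijective _ hbij⟩, ?_, rfl⟩
    simp only [Finset.mem_sigma, Finset.mem_univ, and_true]
    rw [Finset.mem_powersetCard]
    exact ⟨Finset.subset_univ _,
      by rw [Finset.card_image_of_injective _ hf, Finset.card_univ, Fintype.card_fin]⟩
  · rintro ⟨S, e⟩ _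
    rfl

/-- For an `m × m` matrix `A` and `1 ≤ k ≤ m`,
`(1/k!) Σ δ^{i₁ ⋯ i_k}_{j₁ ⋯ j_k} A^{j₁}_{i₁} ⋯ A^{j_k}_{i_k}` equals the sum
of all `k × k` principal minors of `A`, where the sum on the left runs over all
`k`-tuples `(i₁, …, i_k)` and `(j₁, …, j_k)` of indices in `{1, …, m}`. -/
theorem genKroneckerDelta_sum_eq_sum_principal_minors {m k : ℕ}
    (hk1 : 1 ≤ k) (hk2 : k ≤ m) (A : Matrix (Fin m) (Fin m) ℝ) :
    (k.factorial : ℝ)⁻¹ *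
        ∑ i : Fin k → Fin m, ∑ j : Fin k → Fin m,
          genKroneckerDelta i j * ∏ a : Fin k, A (i a) (j a) =
      ∑ S ∈ (Finset.univ : Finset (Fin m)).powersetCard k, principalMinor A S := by
  have key : ∑ i : Fin k → Fin m, (A.submatrix i i).det
      = ∑ S ∈ (Finset.univ : Finset (Fin m)).powersetCard k,
          (k.factorial : ℝ) * principalMinor A S := by
    rw [← Finset.sum_filter_add_sum_filter_not Finset.univ
      (fun i : Fin k → Fin m => Function.Injective i)]
    have h0 : ∑ i ∈ Finset.univ.filter
        (fun i : Fin k → Fin m => ¬ Function.Injective i), (A.submatrix i i).det = 0 := by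
      apply Finset.sum_eq_zero
      intro i hi
      simp only [Finset.mem_filter, Finset.mem_univ, true_and] at hi
      rw [Function.not_injective_iff] at hi
      obtain ⟨a, b, hab, hne⟩ := hi
      apply Matrix.det_zero_of_row_eq hne
      funext c
      simp [Matrix.submatrix_apply, hab]
    rw [h0, add_zero, gkd_sum_inj]
    refine Finset.sum_congr rfl fun S hS => ?_
    have hcard : Fintype.card {x // x ∈ S} = k := by
      simpa using (Finset.mem_powersetCard.mp hS).2
    have hterm : ∀ e : Fin k ≃ {x // x ∈ S},
        (A.submatrix (fun a => ((e a : {x // x ∈ S}) : Fin m))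
          (fun a => ((e a : {x // x ∈ S}) : Fin m))).det = principalMinor A S := by
      intro e
      have heq : A.submatrix (fun a => ((e a : {x // x ∈ S}) : Fin m))
          (fun a => ((e a : {x // x ∈ S}) : Fin m))
          = (A.submatrix (fun i : {x // x ∈ S} => (i : Fin m))
              (fun j : {x // x ∈ S} => (j : Fin m))).submatrix e e := rfl
      rw [heq, Matrix.det_submatrix_equiv_self]
      rfl
    rw [Finset.sum_congr rfl fun e _ => hterm e, Finset.sum_const, nsmul_eq_mul]
    congr 1
    rw [Finset.card_univ, Fintype.card_equiv
      (Fintype.equivFinOfCardEq hcard).symm, Fintype.card_fin]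
  calc (k.factorial : ℝ)⁻¹ *
        ∑ i : Fin k → Fin m, ∑ j : Fin k → Fin m,
          genKroneckerDelta i j * ∏ a : Fin k, A (i a) (j a)
      = (k.factorial : ℝ)⁻¹ * ∑ i : Fin k → Fin m, (A.submatrix i i).det := by
        rw [Finset.sum_congr rfl fun i _ => gkd_inner_sum A i]
    _ = _ := by
        rw [key, Finset.mul_sum]
        refine Finset.sum_congr rfl fun S _ => ?_
        rw [← mul_assoc, inv_mul_cancel₀ (by positivity), one_mul]
end

section
/- Let A and B be real m × m matrices and 0 ≤ k ≤ m − 1. Then the first variation of σ_{k+1} at A in the direction B is given by the Newton transformation: d/dt σ_{k+1}(A + tB) |_{t=0} = tr(T_k(A) · B), where σ_{k+1}(M) denotes the sum of all (k+1) × (k+1) principal minors of M and T_k(A) = Σ_{i=0}^{k} (−1)^i σ_{k−i}(A) A^i. -/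
open Finset

/-- `matSigma k A` is the sum of all `k × k` principal minors of the `m × m`
matrix `A`, with the convention `matSigma 0 A = 1`. -/
noncomputable def matSigma {m : ℕ} (k : ℕ) (A : Matrix (Fin m) (Fin m) ℝ) : ℝ :=
  ∑ S ∈ (Finset.univ : Finset (Fin m)).powersetCard k,
    (A.submatrix (fun i : {x // x ∈ S} => (i : Fin m))
      (fun j : {x // x ∈ S} => (j : Fin m))).det

/-- The `k`-th Newton transformation of an `m × m` matrix `A`:
`T_k(A) = Σ_{i=0}^{k} (−1)^i σ_{k−i}(A) Aⁱ`. -/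
noncomputable def newtonTransform {m : ℕ} (k : ℕ) (A : Matrix (Fin m) (Fin m) ℝ) :
    Matrix (Fin m) (Fin m) ℝ :=
  ∑ i ∈ Finset.range (k + 1), ((-1 : ℝ) ^ i * matSigma (k - i) A) • A ^ i

namespace DetAux
open Polynomial Matrix

variable {m : ℕ}

/-- principal minor on a subset -/
noncomputable def minor (M : Matrix (Fin m) (Fin m) ℝ) (s : Finset (Fin m)) : ℝ :=
  (M.submatrix (fun i : {x // x ∈ s} => (i : Fin m))
      (fun j : {x // x ∈ s} => (j : Fin m))).det

lemma matSigma_eq (j : ℕ) (M : Matrix (Fin m) (Fin m) ℝ) :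
    matSigma j M = ∑ s ∈ (Finset.univ : Finset (Fin m)).powersetCard j, minor M s := rfl

/-- determinant of the matrix which agrees with `M.map C` on rows in `s` and with the
identity elsewhere equals the principal minor on `s`. -/
lemma det_piecewise_one (M : Matrix (Fin m) (Fin m) ℝ) (s : Finset (Fin m)) :
    (Matrix.of (s.piecewise (M.map (C : ℝ →+* ℝ[X])) (1 : Matrix (Fin m) (Fin m) ℝ[X]))).det
      = C (minor M s) := by
  classical
  let e : {x // x ∈ s} ⊕ {x // ¬ x ∈ s} ≃ Fin m := Equiv.sumCompl (· ∈ s)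
  rw [← Matrix.det_submatrix_equiv_self e]
  have hB : (Matrix.of (s.piecewise (M.map (C : ℝ →+* ℝ[X]))
        (1 : Matrix (Fin m) (Fin m) ℝ[X]))).submatrix e e =
      Matrix.fromBlocks
        ((M.submatrix (fun i : {x // x ∈ s} => (i : Fin m))
            (fun j : {x // x ∈ s} => (j : Fin m))).map (C : ℝ →+* ℝ[X]))
        ((M.submatrix (fun i : {x // x ∈ s} => (i : Fin m))
            (fun j : {x // ¬ x ∈ s} => (j : Fin m))).map (C : ℝ →+* ℝ[X]))
        0 1 := by
    ext i j : 1
    cases i with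
    | inl i =>
      cases j with
      | inl j =>
        simp [e, Matrix.submatrix_apply, Equiv.sumCompl_apply_inl,
          Finset.piecewise_eq_of_mem _ _ _ i.2, Finset.piecewise, i.2]
      | inr j =>
        simp [e, Matrix.submatrix_apply, Finset.piecewise_eq_of_mem _ _ _ i.2, Finset.piecewise, i.2]
    | inr i =>
      cases j with
      | inl j =>
        have hij : (i : Fin m) ≠ (j : Fin m) := fun h => i.2 (h ▸ j.2)
        simp [e, Matrix.submatrix_apply, Finset.piecewise_eq_of_notMem _ _ _ i.2,
          Matrix.one_apply, hij, Finset.piecewise, i.2]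
      | inr j =>
        by_cases h : (i : Fin m) = (j : Fin m)
        · have : i = j := Subtype.ext h
          simp [e, this, Matrix.submatrix_apply,
            Finset.piecewise_eq_of_notMem _ _ _ j.2, Matrix.one_apply, Finset.piecewise, j.2]
        · have : i ≠ j := fun hh => h (congrArg _ hh)
          simp [e, Matrix.submatrix_apply, Finset.piecewise_eq_of_notMem _ _ _ i.2,
            Matrix.one_apply, h, this, Finset.piecewise, i.2]
  rw [hB, Matrix.det_fromBlocks_zero₂₁, Matrix.det_one, mul_one]
  exact (RingHom.map_det (C : ℝ →+* ℝ[X]) _).symm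


/-- the characteristic-type polynomial `det (M.map C + X • 1)` -/
noncomputable def pdet (M : Matrix (Fin m) (Fin m) ℝ) : ℝ[X] :=
  (M.map (C : ℝ →+* ℝ[X]) + (X : ℝ[X]) • (1 : Matrix (Fin m) (Fin m) ℝ[X])).det

lemma pdet_eq_sum (M : Matrix (Fin m) (Fin m) ℝ) :
    pdet M = ∑ s : Finset (Fin m), C (minor M s) * X ^ (m - s.card) := by
  classical
  let f := (Matrix.detRowAlternating :
      (Fin m → ℝ[X]) [⋀^Fin m]→ₗ[ℝ[X]] ℝ[X]).toMultilinearMap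
  have hdet : ∀ N : Matrix (Fin m) (Fin m) ℝ[X], N.det = f N := fun _ => rfl
  have h0 : pdet M = f ((M.map (C : ℝ →+* ℝ[X]) : Fin m → Fin m → ℝ[X]) +
      ((X : ℝ[X]) • (1 : Matrix (Fin m) (Fin m) ℝ[X]) : Fin m → Fin m → ℝ[X])) := rfl
  rw [h0]
  erw [MultilinearMap.map_add_univ]
  refine Finset.sum_congr rfl fun s _ => ?_
  have harg : s.piecewise (M.map (C : ℝ →+* ℝ[X]) : Fin m → Fin m → ℝ[X])
        ((X : ℝ[X]) • (1 : Matrix (Fin m) (Fin m) ℝ[X]) : Fin m → Fin m → ℝ[X]) =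
      sᶜ.piecewise
        (fun i => (X : ℝ[X]) • (s.piecewise (M.map (C : ℝ →+* ℝ[X]))
            (1 : Matrix (Fin m) (Fin m) ℝ[X])) i)
        (s.piecewise (M.map (C : ℝ →+* ℝ[X])) (1 : Matrix (Fin m) (Fin m) ℝ[X])) := by
    funext i
    by_cases h : i ∈ s
    · erw [Finset.piecewise_eq_of_mem _ _ _ h,
        Finset.piecewise_eq_of_notMem _ _ _ (by simpa using h),
        Finset.piecewise_eq_of_mem _ _ _ h]
    · erw [Finset.piecewise_eq_of_notMem _ _ _ h,
        Finset.piecewise_eq_of_mem _ _ _ (by simpa using h),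
        Finset.piecewise_eq_of_notMem _ _ _ h]
      rfl
  rw [harg, MultilinearMap.map_piecewise_smul]
  have hcard : ∏ _i ∈ sᶜ, (X : ℝ[X]) = X ^ (m - s.card) := by
    rw [Finset.prod_const, Finset.card_compl, Fintype.card_fin]
  rw [hcard]
  have := det_piecewise_one M s
  have harg2 : f (s.piecewise (M.map (C : ℝ →+* ℝ[X]))
      (1 : Matrix (Fin m) (Fin m) ℝ[X])) = C (minor M s) := this
  rw [harg2, smul_eq_mul, mul_comm]


lemma pdet_eq_sum_sigma (M : Matrix (Fin m) (Fin m) ℝ) :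
    pdet M = ∑ j ∈ Finset.range (m + 1), C (matSigma j M) * X ^ (m - j) := by
  classical
  rw [pdet_eq_sum]
  rw [← Finset.sum_fiberwise_of_maps_to (g := fun s : Finset (Fin m) => s.card)
      (t := Finset.range (m + 1))
      (fun s _ => by simpa using Nat.lt_succ_of_le (by simpa using s.card_le_univ))]
  refine Finset.sum_congr rfl fun j _ => ?_
  have : ∀ s ∈ Finset.univ.filter (fun s : Finset (Fin m) => s.card = j),
      C (minor M s) * X ^ (m - s.card) = C (minor M s) * X ^ (m - j) := by
    intro s hs
    rw [(Finset.mem_filter.mp hs).2]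
  rw [Finset.sum_congr rfl this, ← Finset.sum_mul, ← map_sum, matSigma_eq]
  congr 2
  rw [Finset.powersetCard_eq_filter, Finset.powerset_univ]

lemma coeff_pdet (M : Matrix (Fin m) (Fin m) ℝ) {j : ℕ} (hj : j ≤ m) :
    (pdet M).coeff (m - j) = matSigma j M := by
  rw [pdet_eq_sum_sigma, Polynomial.finset_sum_coeff]
  have : ∀ j' ∈ Finset.range (m + 1),
      (C (matSigma j' M) * X ^ (m - j')).coeff (m - j) =
        if j' = j then matSigma j M else 0 := by
    intro j' hj'
    rw [Polynomial.coeff_C_mul, Polynomial.coeff_X_pow]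
    have hj'' : j' ≤ m := Nat.lt_succ_iff.mp (Finset.mem_range.mp hj')
    by_cases h : j' = j
    · subst h; simp
    · have : ¬ (m - j = m - j') := by omega
      simp [this, h]
  rw [Finset.sum_congr rfl this, Finset.sum_ite_eq' _ j]
  simp [Nat.lt_succ_of_le hj]


lemma pdet_eq_charpoly_neg (A : Matrix (Fin m) (Fin m) ℝ) : pdet A = (-A).charpoly := by
  unfold pdet Matrix.charpoly
  congr 1
  ext i j
  by_cases h : i = j
  · subst h
    simp [Matrix.charmatrix_apply_eq, Matrix.one_apply]
    ring
  · simp [Matrix.charmatrix_apply_ne _ _ _ h, Matrix.one_apply, h]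

lemma pdet_monic (A : Matrix (Fin m) (Fin m) ℝ) : (pdet A).Monic := by
  rw [pdet_eq_charpoly_neg]; exact Matrix.charpoly_monic _

lemma pdet_ne_zero (A : Matrix (Fin m) (Fin m) ℝ) : pdet A ≠ 0 :=
  (pdet_monic A).ne_zero

lemma matSigma_zero (A : Matrix (Fin m) (Fin m) ℝ) : matSigma 0 A = 1 := by
  rw [matSigma_eq]
  rw [Finset.powersetCard_zero, Finset.sum_singleton]
  exact Matrix.det_isEmpty

lemma newtonTransform_zero (A : Matrix (Fin m) (Fin m) ℝ) : newtonTransform 0 A = 1 := by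
  unfold newtonTransform
  simp [matSigma_zero]

lemma newtonTransform_succ (k : ℕ) (A : Matrix (Fin m) (Fin m) ℝ) :
    newtonTransform (k + 1) A = matSigma (k + 1) A • 1 - A * newtonTransform k A := by
  unfold newtonTransform
  rw [Finset.sum_range_succ']
  have h1 : ∀ i ∈ Finset.range (k + 1),
      ((-1 : ℝ) ^ (i + 1) * matSigma (k + 1 - (i + 1)) A) • A ^ (i + 1) =
        -(A * (((-1 : ℝ) ^ i * matSigma (k - i) A) • A ^ i)) := by
    intro i _
    rw [Nat.succ_sub_succ, pow_succ, pow_succ']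
    rw [mul_smul_comm]
    rw [← neg_smul]
    congr 1
    ring
  rw [Finset.sum_congr rfl h1, Finset.sum_neg_distrib, ← Finset.mul_sum]
  simp [sub_eq_neg_add, add_comm]

lemma newtonTransform_comm (k : ℕ) (A : Matrix (Fin m) (Fin m) ℝ) :
    newtonTransform k A * A = A * newtonTransform k A := by
  unfold newtonTransform
  rw [Finset.sum_mul, Finset.mul_sum]
  refine Finset.sum_congr rfl fun i _ => ?_
  rw [smul_mul_assoc, mul_smul_comm, ← pow_succ, ← pow_succ']

lemma neg_pow_eq (A : Matrix (Fin m) (Fin m) ℝ) (j : ℕ) :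
    (-A) ^ j = ((-1 : ℝ) ^ j) • A ^ j := by
  rw [← neg_one_smul ℝ A, _root_.smul_pow]

lemma newtonTransform_card (A : Matrix (Fin m) (Fin m) ℝ) : newtonTransform m A = 0 := by
  have hCH := Matrix.aeval_self_charpoly (-A)
  rw [← pdet_eq_charpoly_neg, pdet_eq_sum_sigma, map_sum] at hCH
  have h1 : ∀ j ∈ Finset.range (m + 1),
      (Polynomial.aeval (-A)) (C (matSigma j A) * X ^ (m - j)) =
        matSigma j A • (-A) ^ (m - j) := by
    intro j _
    rw [_root_.map_mul, Polynomial.aeval_C, map_pow, Polynomial.aeval_X, Algebra.algebraMap_eq_smul_one,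
      smul_mul_assoc, one_mul]
  rw [Finset.sum_congr rfl h1] at hCH
  unfold newtonTransform
  rw [← Finset.sum_range_reflect] at hCH
  rw [← hCH]
  refine Finset.sum_congr rfl fun i hi => ?_
  have hi' : i ≤ m := Nat.lt_succ_iff.mp (Finset.mem_range.mp hi)
  have e1 : m + 1 - 1 - i = m - i := by omega
  have e2 : m - (m - i) = i := by omega
  rw [e1, e2, neg_pow_eq, smul_smul, mul_comm]


lemma map_smul_one (c : ℝ) :
    ((c • (1 : Matrix (Fin m) (Fin m) ℝ)).map (C : ℝ →+* ℝ[X])) =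
      (C c) • (1 : Matrix (Fin m) (Fin m) ℝ[X]) := by
  ext i j
  by_cases h : i = j <;> simp [Matrix.one_apply, h]

lemma map_matrix_mul (P Q : Matrix (Fin m) (Fin m) ℝ) :
    ((P * Q).map (C : ℝ →+* ℝ[X])) = P.map (C : ℝ →+* ℝ[X]) * Q.map (C : ℝ →+* ℝ[X]) :=
  Matrix.map_mul

/-- the candidate adjugate -/
noncomputable def Qadj (A : Matrix (Fin m) (Fin m) ℝ) : Matrix (Fin m) (Fin m) ℝ[X] :=
  ∑ i ∈ Finset.range m, (X : ℝ[X]) ^ (m - 1 - i) • (newtonTransform i A).map (C : ℝ →+* ℝ[X])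

lemma Qadj_mul (A : Matrix (Fin m) (Fin m) ℝ) :
    Qadj A * (A.map (C : ℝ →+* ℝ[X]) + (X : ℝ[X]) • (1 : Matrix (Fin m) (Fin m) ℝ[X])) =
      pdet A • (1 : Matrix (Fin m) (Fin m) ℝ[X]) := by
  unfold Qadj
  rw [Finset.sum_mul]
  have hterm : ∀ i ∈ Finset.range m,
      ((X : ℝ[X]) ^ (m - 1 - i) • (newtonTransform i A).map (C : ℝ →+* ℝ[X])) *
        (A.map (C : ℝ →+* ℝ[X]) + (X : ℝ[X]) • (1 : Matrix (Fin m) (Fin m) ℝ[X])) =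
      (C (matSigma (i + 1) A) * (X : ℝ[X]) ^ (m - 1 - i)) • (1 : Matrix (Fin m) (Fin m) ℝ[X]) +
        ((X : ℝ[X]) ^ (m - i) • (newtonTransform i A).map (C : ℝ →+* ℝ[X]) -
         (X : ℝ[X]) ^ (m - (i + 1)) • (newtonTransform (i + 1) A).map (C : ℝ →+* ℝ[X])) := by
    intro i hi
    have hi' : i < m := Finset.mem_range.mp hi
    rw [smul_mul_assoc, Matrix.mul_add]
    have h1 : (newtonTransform i A).map (C : ℝ →+* ℝ[X]) * A.map (C : ℝ →+* ℝ[X]) =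
        C (matSigma (i + 1) A) • (1 : Matrix (Fin m) (Fin m) ℝ[X]) -
          (newtonTransform (i + 1) A).map (C : ℝ →+* ℝ[X]) := by
      rw [← map_matrix_mul, newtonTransform_comm]
      have : A * newtonTransform i A = matSigma (i + 1) A • 1 - newtonTransform (i + 1) A := by
        rw [newtonTransform_succ, sub_sub_cancel]
      rw [this, Matrix.map_sub (f := (C : ℝ →+* ℝ[X]))]
      · rw [map_smul_one]
      · exact fun a b => map_sub C a b
    have h2 : (newtonTransform i A).map (C : ℝ →+* ℝ[X]) *
        ((X : ℝ[X]) • (1 : Matrix (Fin m) (Fin m) ℝ[X])) =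
        (X : ℝ[X]) • (newtonTransform i A).map (C : ℝ →+* ℝ[X]) := by
      rw [mul_smul_comm, mul_one]
    rw [h1, h2, smul_add, smul_sub]
    have e1 : (X : ℝ[X]) ^ (m - 1 - i) • ((X : ℝ[X]) •
        (newtonTransform i A).map (C : ℝ →+* ℝ[X])) =
        (X : ℝ[X]) ^ (m - i) • (newtonTransform i A).map (C : ℝ →+* ℝ[X]) := by
      rw [smul_smul, ← pow_succ]
      congr 2
      omega
    have e2 : (X : ℝ[X]) ^ (m - 1 - i) • (C (matSigma (i + 1) A) •
        (1 : Matrix (Fin m) (Fin m) ℝ[X])) =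
        (C (matSigma (i + 1) A) * (X : ℝ[X]) ^ (m - 1 - i)) •
          (1 : Matrix (Fin m) (Fin m) ℝ[X]) := by
      rw [smul_smul, mul_comm]
    have e3 : m - 1 - i = m - (i + 1) := by omega
    rw [e1, e2, ← e3]
    abel
  rw [Finset.sum_congr rfl hterm, Finset.sum_add_distrib, Finset.sum_range_sub']
  have hg0 : (X : ℝ[X]) ^ (m - 0) • (newtonTransform 0 A).map (C : ℝ →+* ℝ[X]) =
      (X : ℝ[X]) ^ m • (1 : Matrix (Fin m) (Fin m) ℝ[X]) := by
    rw [newtonTransform_zero, Nat.sub_zero]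
    congr 1
    ext i j
    by_cases h : i = j <;> simp [Matrix.one_apply, h]
  have hgm : (X : ℝ[X]) ^ (m - m) • (newtonTransform m A).map (C : ℝ →+* ℝ[X]) = 0 := by
    rw [newtonTransform_card]
    ext i j
    simp
  rw [hg0, hgm, sub_zero, ← Finset.sum_smul, pdet_eq_sum_sigma, Finset.sum_range_succ']
  rw [add_smul]
  congr 1
  · refine congrArg (· • (1 : Matrix (Fin m) (Fin m) ℝ[X])) ?_
    refine Finset.sum_congr rfl fun i _ => ?_
    congr 2
    omega
  · rw [matSigma_zero, Polynomial.C_1, one_mul, Nat.sub_zero]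

lemma adjugate_eq_Qadj (A : Matrix (Fin m) (Fin m) ℝ) :
    (A.map (C : ℝ →+* ℝ[X]) + (X : ℝ[X]) • (1 : Matrix (Fin m) (Fin m) ℝ[X])).adjugate =
      Qadj A := by
  set M₀ := A.map (C : ℝ →+* ℝ[X]) + (X : ℝ[X]) • (1 : Matrix (Fin m) (Fin m) ℝ[X]) with hM₀
  have h1 : (Qadj A - M₀.adjugate) * M₀ = 0 := by
    rw [Matrix.sub_mul, Qadj_mul, Matrix.adjugate_mul]
    have : M₀.det = pdet A := rfl
    rw [this, sub_self]
  have h2 : pdet A • (Qadj A - M₀.adjugate) = 0 := by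
    have h3 : (Qadj A - M₀.adjugate) * (M₀ * M₀.adjugate) = 0 := by
      rw [← Matrix.mul_assoc, h1, Matrix.zero_mul]
    rw [Matrix.mul_adjugate] at h3
    have : M₀.det = pdet A := rfl
    rw [this] at h3
    rw [Matrix.mul_smul, Matrix.mul_one] at h3
    exact h3
  have h4 : Qadj A - M₀.adjugate = 0 := by
    apply Matrix.ext
    intro i j
    have := congrFun (congrFun h2 i) j
    simp only [Matrix.smul_apply, Matrix.zero_apply, smul_eq_mul] at this
    rcases mul_eq_zero.mp this with h5 | h5
    · exact absurd h5 (pdet_ne_zero A)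
    · simpa using h5
  have := sub_eq_zero.mp h4
  exact this.symm


lemma sum_det_updateRow (M N : Matrix (Fin m) (Fin m) ℝ[X]) :
    ∑ i, (M.updateRow i (N i)).det = (M.adjugate * N).trace := by
  classical
  have h1 : ∀ i : Fin m, (M.updateRow i (N i)).det = ∑ j, N i j * M.adjugate j i := by
    intro i
    rw [← Matrix.cramer_transpose_apply]
    have hNi : N i = ∑ j, N i j • (Pi.single j 1 : Fin m → ℝ[X]) := by
      funext x
      simp [Pi.single_apply, Finset.sum_ite_eq]
    have hc : Matrix.cramer Mᵀ (N i) = ∑ j, N i j • Matrix.cramer Mᵀ (Pi.single j 1) := by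
      conv_lhs => rw [hNi]
      rw [map_sum]
      exact Finset.sum_congr rfl fun j _ => LinearMap.map_smul _ _ _
    rw [hc, Finset.sum_apply]
    refine Finset.sum_congr rfl fun j _ => ?_
    rw [Pi.smul_apply, smul_eq_mul]
    congr 1
  rw [Finset.sum_congr rfl fun i _ => h1 i]
  unfold Matrix.trace
  rw [Finset.sum_comm]
  refine Finset.sum_congr rfl fun j _ => ?_
  simp only [Matrix.diag_apply, Matrix.mul_apply]
  exact Finset.sum_congr rfl fun i _ => mul_comm _ _

lemma trace_map (P : Matrix (Fin m) (Fin m) ℝ) :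
    (P.map (C : ℝ →+* ℝ[X])).trace = C P.trace := by
  unfold Matrix.trace
  rw [map_sum]
  rfl

lemma coeff_trace_Qadj_mul {k : ℕ} (hm : 1 ≤ m) (hk : k ≤ m - 1)
    (A B : Matrix (Fin m) (Fin m) ℝ) :
    ((Qadj A * B.map (C : ℝ →+* ℝ[X])).trace).coeff (m - (k + 1)) =
      ((newtonTransform k A) * B).trace := by
  unfold Qadj
  rw [Finset.sum_mul, Matrix.trace_sum]
  have h1 : ∀ i ∈ Finset.range m,
      (((X : ℝ[X]) ^ (m - 1 - i) • (newtonTransform i A).map (C : ℝ →+* ℝ[X])) *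
        B.map (C : ℝ →+* ℝ[X])).trace =
      C ((newtonTransform i A * B).trace) * (X : ℝ[X]) ^ (m - 1 - i) := by
    intro i _
    rw [Matrix.smul_mul, Matrix.trace_smul, ← map_matrix_mul, trace_map, smul_eq_mul, mul_comm]
  rw [Finset.sum_congr rfl h1, Polynomial.finset_sum_coeff]
  have h2 : ∀ i ∈ Finset.range m,
      (C ((newtonTransform i A * B).trace) * (X : ℝ[X]) ^ (m - 1 - i)).coeff (m - (k + 1)) =
        if i = k then (newtonTransform k A * B).trace else 0 := by
    intro i hi
    have hi' : i < m := Finset.mem_range.mp hi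
    rw [Polynomial.coeff_C_mul, Polynomial.coeff_X_pow]
    by_cases h : i = k
    · subst h
      have : m - 1 - i = m - (i + 1) := by omega
      simp [this]
    · have h3 : ¬ (m - 1 - i = m - (k + 1)) := by omega
      have h4 : ¬ (m - (k + 1) = m - 1 - i) := by omega
      simp [h3, h4, h]
  rw [Finset.sum_congr rfl h2, Finset.sum_ite_eq' _ k]
  have hkm : k < m := by omega
  simp [Finset.mem_range, hkm]


lemma pdet_expand (A B : Matrix (Fin m) (Fin m) ℝ) (t : ℝ) :
    pdet (A + t • B) = ∑ s : Finset (Fin m), (C t) ^ s.card *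
      (Matrix.of (s.piecewise (B.map (C : ℝ →+* ℝ[X]) : Fin m → Fin m → ℝ[X])
        ((A.map (C : ℝ →+* ℝ[X]) + (X : ℝ[X]) • (1 : Matrix (Fin m) (Fin m) ℝ[X]) :
          Matrix (Fin m) (Fin m) ℝ[X]) : Fin m → Fin m → ℝ[X]))).det := by
  classical
  let f := (Matrix.detRowAlternating :
      (Fin m → ℝ[X]) [⋀^Fin m]→ₗ[ℝ[X]] ℝ[X]).toMultilinearMap
  have hmat : (A + t • B).map (C : ℝ →+* ℝ[X]) +
      (X : ℝ[X]) • (1 : Matrix (Fin m) (Fin m) ℝ[X]) =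
      C t • B.map (C : ℝ →+* ℝ[X]) +
        (A.map (C : ℝ →+* ℝ[X]) + (X : ℝ[X]) • (1 : Matrix (Fin m) (Fin m) ℝ[X])) := by
    ext i j
    simp [Matrix.add_apply, Matrix.map_apply, Matrix.smul_apply, smul_eq_mul, map_add, _root_.map_mul]
    ring
  have h0 : pdet (A + t • B) = f
      ((C t • B.map (C : ℝ →+* ℝ[X]) : Matrix (Fin m) (Fin m) ℝ[X]) +
        ((A.map (C : ℝ →+* ℝ[X]) + (X : ℝ[X]) • (1 : Matrix (Fin m) (Fin m) ℝ[X]) :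
          Matrix (Fin m) (Fin m) ℝ[X]) : Fin m → Fin m → ℝ[X])) := by
    unfold pdet
    rw [hmat]
    rfl
  rw [h0]
  erw [MultilinearMap.map_add_univ]
  refine Finset.sum_congr rfl fun s _ => ?_
  set N : Fin m → Fin m → ℝ[X] := (B.map (C : ℝ →+* ℝ[X]) : Fin m → Fin m → ℝ[X]) with hN
  set M₀ : Fin m → Fin m → ℝ[X] :=
    ((A.map (C : ℝ →+* ℝ[X]) + (X : ℝ[X]) • (1 : Matrix (Fin m) (Fin m) ℝ[X]) :
      Matrix (Fin m) (Fin m) ℝ[X]) : Fin m → Fin m → ℝ[X]) with hM₀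
  have harg : s.piecewise ((C t • B.map (C : ℝ →+* ℝ[X]) :
        Matrix (Fin m) (Fin m) ℝ[X]) : Fin m → Fin m → ℝ[X]) M₀ =
      s.piecewise (fun i => C t • (s.piecewise N M₀) i) (s.piecewise N M₀) := by
    funext i
    by_cases h : i ∈ s
    · erw [Finset.piecewise_eq_of_mem _ _ _ h, Finset.piecewise_eq_of_mem _ _ _ h,
        Finset.piecewise_eq_of_mem _ _ _ h]
      rfl
    · erw [Finset.piecewise_eq_of_notMem _ _ _ h, Finset.piecewise_eq_of_notMem _ _ _ h,
        Finset.piecewise_eq_of_notMem _ _ _ h]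
  rw [harg, MultilinearMap.map_piecewise_smul, Finset.prod_const, smul_eq_mul]
  rfl

end DetAux

/-- For real `m × m` matrices `A`, `B` and `0 ≤ k ≤ m − 1`, the first variation
of `σ_{k+1}` at `A` in the direction `B` is given by the Newton transformation:
`d/dt σ_{k+1}(A + tB) |_{t=0} = tr(T_k(A) · B)`. -/
theorem deriv_matSigma_eq_trace_newtonTransform_mul {m k : ℕ} (hk : k ≤ m - 1)
    (A B : Matrix (Fin m) (Fin m) ℝ) :
    deriv (fun t : ℝ => matSigma (k + 1) (A + t • B)) 0 =
      Matrix.trace (newtonTransform k A * B) := by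
  classical
  open Polynomial DetAux in
  rcases Nat.eq_zero_or_pos m with hm | hm
  · subst hm
    have h1 : (fun t : ℝ => matSigma (k + 1) (A + t • B)) = fun _ => (0 : ℝ) := by
      funext t
      unfold matSigma
      have he : Finset.powersetCard (k + 1) (Finset.univ : Finset (Fin 0)) = ∅ := by
        rw [Finset.eq_empty_iff_forall_notMem]
        intro S hS
        rw [Finset.mem_powersetCard] at hS
        have h2 : S.card ≤ 0 := by simpa using S.card_le_univ
        have h3 := hS.2
        omega
      rw [he, Finset.sum_empty]
    rw [h1, deriv_const]
    rw [show Matrix.trace (newtonTransform k A * B) = 0 from by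
      unfold Matrix.trace
      exact Finset.sum_of_isEmpty _]
  · have hk1 : k + 1 ≤ m := by omega
    set n : ℕ := m - (k + 1) with hn
    set N : Matrix (Fin m) (Fin m) ℝ[X] := B.map (C : ℝ →+* ℝ[X]) with hN
    set M₀ : Matrix (Fin m) (Fin m) ℝ[X] :=
      A.map (C : ℝ →+* ℝ[X]) + (X : ℝ[X]) • (1 : Matrix (Fin m) (Fin m) ℝ[X]) with hM₀
    set d : Finset (Fin m) → ℝ[X] := fun s =>
      (Matrix.of (s.piecewise (N : Fin m → Fin m → ℝ[X]) (M₀ : Fin m → Fin m → ℝ[X]))).det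
      with hd
    have hfun : (fun t : ℝ => matSigma (k + 1) (A + t • B)) =
        fun t => ∑ s : Finset (Fin m), (d s).coeff n * t ^ s.card := by
      funext t
      rw [← coeff_pdet (A + t • B) hk1, pdet_expand A B t, Polynomial.finset_sum_coeff]
      refine Finset.sum_congr rfl fun s _ => ?_
      rw [← map_pow, Polynomial.coeff_C_mul, mul_comm]
    have hderiv : HasDerivAt (fun t => ∑ s : Finset (Fin m), (d s).coeff n * t ^ s.card)
        (∑ s : Finset (Fin m), (d s).coeff n * (s.card * (0 : ℝ) ^ (s.card - 1))) 0 :=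
      HasDerivAt.fun_sum fun s _ => (hasDerivAt_pow s.card (0 : ℝ)).const_mul _
    rw [hfun, hderiv.deriv]
    have hcongr : ∀ s : Finset (Fin m),
        (d s).coeff n * (s.card * (0 : ℝ) ^ (s.card - 1)) =
          if s.card = 1 then (d s).coeff n else 0 := by
      intro s
      rcases hc : s.card with _ | c
      · simp
      · rcases c with _ | c
        · simp
        · simp [zero_pow]
    rw [Finset.sum_congr rfl fun s _ => hcongr s, ← Finset.sum_filter]
    have hps : Finset.univ.filter (fun s : Finset (Fin m) => s.card = 1) =
        Finset.univ.powersetCard 1 := by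
      rw [Finset.powersetCard_eq_filter, Finset.powerset_univ]
    rw [hps, Finset.powersetCard_one, Finset.sum_map]
    have hsingle : ∀ i : Fin m, d {i} = (M₀.updateRow i (N i)).det := by
      intro i
      change (Matrix.of (({i} : Finset (Fin m)).piecewise (N : Fin m → Fin m → ℝ[X])
        (M₀ : Fin m → Fin m → ℝ[X]))).det = _
      congr 1
      funext a
      by_cases h : a = i
      · subst h
        erw [Finset.piecewise_singleton]
        simp [Matrix.updateRow]
      · erw [Finset.piecewise_singleton]
        simp [Matrix.updateRow, Function.update, h]
    have hmain : ∑ i : Fin m, (d {i}).coeff n = ((newtonTransform k A) * B).trace := by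
      rw [Finset.sum_congr rfl fun i _ => congrArg (Polynomial.coeff · n) (hsingle i)]
      rw [← Polynomial.finset_sum_coeff, sum_det_updateRow M₀ N, adjugate_eq_Qadj]
      exact coeff_trace_Qadj_mul hm hk A B
    simpa using hmain
end
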